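/- Let Σ ⊆ AP \ {wht, shdw} be finite and α ≠ β be letters in Σ. Define φ^=_{α,β} := Half([wht ∧ α] ∨ [shdw ∧ ¬β̃]). Then for every truly Σ-shadowy word w and every even (white) position p of w: w,p ⊨ φ^=_{α,β} if and only if |{j < p : wht ∈ w_j and α ∈ w_j}| = |{j < p : wht ∈ w_j and β ∈ w_j}|. -/
import Mathlib


/- STATEMENT 11: On truly Sig-shadowy words, the formula φ^=_{α,β} expresses the
equicardinality of white positions carrying α and white positions carrying β. -/

namespace EqCard11

abbrev Word := List (Set ℕ)

inductive Formula where
  | atom (a : ℕ)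
  | neg (φ : Formula)
  | conj (φ ψ : Formula)
  | fut (φ : Formula)
  | half (φ : Formula)

def Sat (w : Word) : ℕ → Formula → Prop
  | i, .atom a => a ∈ w.getD i ∅
  | i, .neg φ => ¬ Sat w i φ
  | i, .conj φ ψ => Sat w i φ ∧ Sat w i ψ
  | i, .fut φ => ∃ j, i ≤ j ∧ j < w.length ∧ Sat w j φ
  | i, .half φ => 2 * Set.ncard {j | j < i ∧ Sat w j φ} = i

def fdisj (φ ψ : Formula) : Formula := .neg (.conj (.neg φ) (.neg ψ))

/-- `φ^=_{α,β} := Half([wht ∧ α] ∨ [shdw ∧ ¬β̃])`. -/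
def φeq (wht shdw : ℕ) (tilde : ℕ → ℕ) (α β : ℕ) : Formula :=
  .half (fdisj (.conj (.atom wht) (.atom α))
               (.conj (.atom shdw) (.neg (.atom (tilde β)))))

def Shadowy (wht shdw : ℕ) (w : Word) : Prop :=
  Even w.length ∧
  (∀ j < w.length, Even j → wht ∈ w.getD j ∅ ∧ shdw ∉ w.getD j ∅) ∧
  (∀ j < w.length, Odd j → shdw ∈ w.getD j ∅ ∧ wht ∉ w.getD j ∅)

def TrulyShadowy (wht shdw : ℕ) (Sig : Finset ℕ) (tilde : ℕ → ℕ) (w : Word) : Prop :=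
  Shadowy wht shdw w ∧
  ∀ σ ∈ Sig,
    (∀ j < w.length, σ ∈ w.getD j ∅ → Even j) ∧
    (∀ j < w.length, tilde σ ∈ w.getD j ∅ → Odd j) ∧
    (∀ p, Even p → p + 1 < w.length →
        (σ ∈ w.getD p ∅ ↔ tilde σ ∈ w.getD (p + 1) ∅))

open Classical in
private lemma sat_fdisj (w : Word) (i : ℕ) (φ ψ : Formula) :
    Sat w i (fdisj φ ψ) ↔ Sat w i φ ∨ Sat w i ψ := by
  simp only [fdisj, Sat]
  tauto

open Classical in
private lemma key (wht shdw : ℕ) (tilde : ℕ → ℕ) (α β : ℕ) (w : Word)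
    (heven : ∀ j < w.length, Even j → wht ∈ w.getD j ∅ ∧ shdw ∉ w.getD j ∅)
    (hodd : ∀ j < w.length, Odd j → shdw ∈ w.getD j ∅ ∧ wht ∉ w.getD j ∅)
    (hlink : ∀ q, Even q → q + 1 < w.length →
      (β ∈ w.getD q ∅ ↔ tilde β ∈ w.getD (q + 1) ∅)) :
    ∀ k, 2 * k ≤ w.length →
      ((Finset.range (2 * k)).filter (fun j =>
          Sat w j (fdisj (.conj (.atom wht) (.atom α))
            (.conj (.atom shdw) (.neg (.atom (tilde β))))))).card
      + ((Finset.range (2 * k)).filter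
          (fun j => wht ∈ w.getD j ∅ ∧ β ∈ w.getD j ∅)).card
      = ((Finset.range (2 * k)).filter
          (fun j => wht ∈ w.getD j ∅ ∧ α ∈ w.getD j ∅)).card + k := by
  intro k
  induction k with
  | zero => simp
  | succ n ih =>
    intro hle
    have h0 : 2 * n < w.length := by omega
    have h1 : 2 * n + 1 < w.length := by omega
    have hE : Even (2 * n) := even_two_mul n
    have hO : Odd (2 * n + 1) := ⟨n, by ring⟩
    obtain ⟨hwE, hsE⟩ := heven _ h0 hE
    obtain ⟨hsO, hwO⟩ := hodd _ h1 hO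
    have hlk := hlink (2 * n) hE h1
    have satE : Sat w (2 * n) (fdisj (.conj (.atom wht) (.atom α))
        (.conj (.atom shdw) (.neg (.atom (tilde β))))) ↔ α ∈ w.getD (2 * n) ∅ := by
      rw [sat_fdisj]; simp only [Sat]; tauto
    have satO : Sat w (2 * n + 1) (fdisj (.conj (.atom wht) (.atom α))
        (.conj (.atom shdw) (.neg (.atom (tilde β))))) ↔ ¬ β ∈ w.getD (2 * n) ∅ := by
      rw [sat_fdisj]; simp only [Sat]; tauto
    have heq : 2 * (n + 1) = (2 * n + 1) + 1 := by ring
    rw [heq]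
    have ihn := ih (by omega)
    simp only [Finset.card_filter] at ihn ⊢
    simp only [Finset.sum_range_succ]
    have eA : (if wht ∈ w.getD (2 * n) ∅ ∧ α ∈ w.getD (2 * n) ∅ then 1 else 0)
        = (if α ∈ w.getD (2 * n) ∅ then 1 else 0) := by
      by_cases h : α ∈ w.getD (2 * n) ∅
      · rw [if_pos ⟨hwE, h⟩, if_pos h]
      · rw [if_neg (fun hc => h hc.2), if_neg h]
    have eA' : (if wht ∈ w.getD (2 * n + 1) ∅ ∧ α ∈ w.getD (2 * n + 1) ∅ then 1 else 0)
        = 0 := by rw [if_neg (fun hc => hwO hc.1)]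
    have eB : (if wht ∈ w.getD (2 * n) ∅ ∧ β ∈ w.getD (2 * n) ∅ then 1 else 0)
        = (if β ∈ w.getD (2 * n) ∅ then 1 else 0) := by
      by_cases h : β ∈ w.getD (2 * n) ∅
      · rw [if_pos ⟨hwE, h⟩, if_pos h]
      · rw [if_neg (fun hc => h hc.2), if_neg h]
    have eB' : (if wht ∈ w.getD (2 * n + 1) ∅ ∧ β ∈ w.getD (2 * n + 1) ∅ then 1 else 0)
        = 0 := by rw [if_neg (fun hc => hwO hc.1)]
    have eS : (if Sat w (2 * n) (fdisj (.conj (.atom wht) (.atom α))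
          (.conj (.atom shdw) (.neg (.atom (tilde β))))) then 1 else 0)
        = (if α ∈ w.getD (2 * n) ∅ then 1 else 0) := by
      by_cases h : α ∈ w.getD (2 * n) ∅
      · rw [if_pos (satE.mpr h), if_pos h]
      · rw [if_neg (fun hs => h (satE.mp hs)), if_neg h]
    have eS' : (if Sat w (2 * n + 1) (fdisj (.conj (.atom wht) (.atom α))
          (.conj (.atom shdw) (.neg (.atom (tilde β))))) then 1 else 0)
        = (if β ∈ w.getD (2 * n) ∅ then 0 else 1) := by
      by_cases h : β ∈ w.getD (2 * n) ∅
      · rw [if_neg (fun hs => (satO.mp hs) h), if_pos h]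
      · rw [if_pos (satO.mpr h), if_neg h]
    rw [eA, eA', eB, eB', eS, eS']
    by_cases hA : α ∈ w.getD (2 * n) ∅ <;> by_cases hB : β ∈ w.getD (2 * n) ∅ <;>
      simp only [hA, hB, if_true, if_false, ite_true, ite_false,
        eq_self_iff_true, not_true, not_false_iff] <;> omega

theorem φeq_correct
    (wht shdw : ℕ) (hws : wht ≠ shdw)
    (Sig : Finset ℕ) (tilde : ℕ → ℕ)
    (hSigw : ∀ σ ∈ Sig, σ ≠ wht ∧ σ ≠ shdw)
    (htilde_ne : ∀ σ ∈ Sig, tilde σ ≠ σ ∧ tilde σ ∉ Sig ∧ tilde σ ≠ wht ∧ tilde σ ≠ shdw)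
    (htilde_inj : ∀ σ ∈ Sig, ∀ σ' ∈ Sig, tilde σ = tilde σ' → σ = σ')
    (α β : ℕ) (hα : α ∈ Sig) (hβ : β ∈ Sig) (hαβ : α ≠ β)
    (w : Word) (hw : w ≠ []) (htruly : TrulyShadowy wht shdw Sig tilde w)
    (p : ℕ) (hp : p < w.length) (hpe : Even p) :
    Sat w p (φeq wht shdw tilde α β) ↔
      Set.ncard {j | j < p ∧ wht ∈ w.getD j ∅ ∧ α ∈ w.getD j ∅} =
      Set.ncard {j | j < p ∧ wht ∈ w.getD j ∅ ∧ β ∈ w.getD j ∅} := by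
  classical
  obtain ⟨⟨_, heven, hodd⟩, hsig⟩ := htruly
  have hlink := (hsig β hβ).2.2
  obtain ⟨k, hk⟩ := hpe
  have hk2 : p = 2 * k := by omega
  have hset : ∀ P : ℕ → Prop, {j | j < p ∧ P j} = ↑((Finset.range p).filter P) := by
    intro P; ext j; simp
  have hkey := key wht shdw tilde α β w heven hodd
    (fun q hq h1 => hlink q hq h1) k (by omega)
  have hgoal : Sat w p (φeq wht shdw tilde α β) ↔
      2 * Set.ncard {j | j < p ∧ Sat w j (fdisj (.conj (.atom wht) (.atom α))
        (.conj (.atom shdw) (.neg (.atom (tilde β)))))} = p := Iff.rfl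
  have c1 : Set.ncard {j | j < p ∧ Sat w j (fdisj (.conj (.atom wht) (.atom α))
        (.conj (.atom shdw) (.neg (.atom (tilde β)))))}
      = ((Finset.range p).filter (fun j => Sat w j (fdisj (.conj (.atom wht) (.atom α))
        (.conj (.atom shdw) (.neg (.atom (tilde β))))))).card := by
    rw [hset, Set.ncard_coe_finset]; try (congr 1; exact Finset.filter_congr_decidable ..)
  have c2 : Set.ncard {j | j < p ∧ wht ∈ w.getD j ∅ ∧ α ∈ w.getD j ∅}
      = ((Finset.range p).filter (fun j => wht ∈ w.getD j ∅ ∧ α ∈ w.getD j ∅)).card := by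
    rw [hset, Set.ncard_coe_finset]; try (congr 1; exact Finset.filter_congr_decidable ..)
  have c3 : Set.ncard {j | j < p ∧ wht ∈ w.getD j ∅ ∧ β ∈ w.getD j ∅}
      = ((Finset.range p).filter (fun j => wht ∈ w.getD j ∅ ∧ β ∈ w.getD j ∅)).card := by
    rw [hset, Set.ncard_coe_finset]; try (congr 1; exact Finset.filter_congr_decidable ..)
  rw [hgoal, c1, c2, c3, hk2]
  omega

end EqCard11
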